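/- Consider the noiseless autoregressive bandit dynamics: a finite action set A = {1,...,n}, an order k ≥ 1, and for each action a a parameter vector γ(a) = (γ_0(a), γ_1(a), ..., γ_k(a)) ∈ ℝ^{k+1} with γ_i(a) ≥ 0 for all i ∈ {0,...,k}. Given an initial context z_0 = (1, x_0, x_{-1}, ..., x_{-k+1}) and an action sequence (a_t)_{t=1}^T, rewards evolve by x_t = ⟨γ(a_t), z_{t-1}⟩ where z_{t-1} = (1, x_{t-1}, ..., x_{t-k}). Then the greedy action sequence defined by a_t ∈ argmax_{a ∈ A} ⟨γ(a), z_{t-1}⟩ (where z_{t-1} is generated by the greedy choices themselves) attains the maximum of the cumulative reward Σ_{t=1}^T x_t over all action sequences starting from the same initial context z_0. -/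

import Mathlib

/-!
STATEMENT 0: In the noiseless autoregressive bandit of order `k` with action set
`Fin n` and nonnegative parameters `γ a i` (for `i ∈ {0,…,k}`), the greedy action
sequence (choosing at each round an action maximizing `⟨γ(a), z_{t-1}⟩` along its own
trajectory) attains the maximum of the cumulative reward `∑_{t=1}^T x_t` over all
action sequences starting from the same initial context.
Rewards are indexed by `ℤ`; initial values (the context `z_0`) are the values for `s ≤ 0`.
-/
theorem greedy_policy_optimal
    (n k T : ℕ) (hn : 1 ≤ n) (hk : 1 ≤ k)
    (γ : Fin n → ℕ → ℝ)
    (hγ : ∀ (a : Fin n) (i : ℕ), i ≤ k → 0 ≤ γ a i)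
    (init : ℤ → ℝ)
    -- greedy action sequence and its trajectory
    (ag : ℤ → Fin n) (x : ℤ → ℝ)
    (hx0 : ∀ s : ℤ, s ≤ 0 → x s = init s)
    (hxrec : ∀ t : ℤ, 1 ≤ t →
      x t = γ (ag t) 0 + ∑ i ∈ Finset.Icc 1 k, γ (ag t) i * x (t - i))
    (hgreedy : ∀ t : ℤ, 1 ≤ t → ∀ a : Fin n,
      γ a 0 + ∑ i ∈ Finset.Icc 1 k, γ a i * x (t - i) ≤
        γ (ag t) 0 + ∑ i ∈ Finset.Icc 1 k, γ (ag t) i * x (t - i))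
    -- an arbitrary action sequence and its trajectory from the same initial context
    (b : ℤ → Fin n) (y : ℤ → ℝ)
    (hy0 : ∀ s : ℤ, s ≤ 0 → y s = init s)
    (hyrec : ∀ t : ℤ, 1 ≤ t →
      y t = γ (b t) 0 + ∑ i ∈ Finset.Icc 1 k, γ (b t) i * y (t - i)) :
    ∑ t ∈ Finset.Icc (1 : ℤ) (T : ℤ), y t ≤ ∑ t ∈ Finset.Icc (1 : ℤ) (T : ℤ), x t := by
  have key : ∀ m : ℕ, ∀ s : ℤ, s ≤ (m : ℤ) → y s ≤ x s := by
    intro m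
    induction m with
    | zero =>
      intro s hs
      rw [hx0 s (by exact_mod_cast hs), hy0 s (by exact_mod_cast hs)]
    | succ m ih =>
      intro s hs
      rcases le_or_gt s (m : ℤ) with h | h
      · exact ih s h
      · have hs1 : s = (m : ℤ) + 1 := by omega
        have hspos : 1 ≤ s := by omega
        rw [hxrec s hspos, hyrec s hspos]
        calc γ (b s) 0 + ∑ i ∈ Finset.Icc 1 k, γ (b s) i * y (s - i)
            ≤ γ (b s) 0 + ∑ i ∈ Finset.Icc 1 k, γ (b s) i * x (s - i) := by
              apply add_le_add_right
              apply Finset.sum_le_sum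
              intro i hi
              simp only [Finset.mem_Icc] at hi
              have := ih (s - i) (by omega)
              exact mul_le_mul_of_nonneg_left this (hγ (b s) i hi.2)
          _ ≤ _ := hgreedy s hspos (b s)
  apply Finset.sum_le_sum
  intro t ht
  simp only [Finset.mem_Icc] at ht
  exact key T t ht.2
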